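/- Let G be a finite simple graph that is not a complete graph. Then the treedepth of G equals the minimum, over all minimal separators S of G, of |S| + td(G ∖ S). -/

import Mathlib

open SimpleGraph

attribute [local instance] Classical.propDecidable

noncomputable section

/-- A rooted forest on a vertex type `V`, given by a parent map together with a
depth function (the depth of a root is `1`, and the depth of a child is the depth
of its parent plus one).  The existence of such a depth function guarantees that
the parent map is acyclic, i.e. that the structure really is a rooted forest. -/
structure RootedForest (V : Type) where
  parent : V → Option V
  depth : V → ℕ
  depth_root : ∀ v, parent v = none → depth v = 1
  depth_parent : ∀ v u, parent v = some u → depth v = depth u + 1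

namespace RootedForest

variable {V : Type}

/-- `T.Ancestor u v` means that `u` is a (reflexive) ancestor of `v` in `T`. -/
def Ancestor (T : RootedForest V) (u v : V) : Prop :=
  Relation.ReflTransGen (fun a b => T.parent a = some b) v u

/-- The height of a rooted forest: the maximum number of vertices on a
root-to-leaf path of one of its trees (0 for the empty forest). -/
def height (T : RootedForest V) [Fintype V] : ℕ :=
  Finset.univ.sup T.depth

/-- The number of children of a vertex. -/
def childCount (T : RootedForest V) [Fintype V] (u : V) : ℕ :=
  (Finset.univ.filter (fun v => T.parent v = some u)).card

/-- The set of vertices of depth at most `d` in `T`. -/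
def top (T : RootedForest V) (d : ℕ) : Set V := {v | T.depth v ≤ d}

/-- `T` is a rooted tree if it has exactly one root. -/
def IsTree (T : RootedForest V) : Prop := ∃! r, T.parent r = none

/-- The top separator of a rooted tree `T`: if no vertex of `T` has more than one
child (i.e. `T` is a path), it is all of `V(T)`; otherwise it is the set of
vertices of depth at most the depth of the minimum-depth vertex having more than
one child. -/
def topSep (T : RootedForest V) [Fintype V] : Finset V :=
  if _ : ∃ p, 2 ≤ T.childCount p then
    Finset.univ.filter
      (fun v => T.depth v ≤ sInf {d | ∃ p, 2 ≤ T.childCount p ∧ T.depth p = d})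
  else Finset.univ

end RootedForest

/-- `T` is a treedepth decomposition of `G`: a rooted forest on the vertex set of
`G` such that the endpoints of every edge of `G` are in ancestor-descendant
relation. -/
def IsTDDecomp {V : Type} (G : SimpleGraph V) (T : RootedForest V) : Prop :=
  ∀ u v, G.Adj u v → T.Ancestor u v ∨ T.Ancestor v u

/-- The treedepth of a finite graph: the minimum height of a treedepth
decomposition of `G`. -/
def treedepth {V : Type} [Fintype V] (G : SimpleGraph V) : ℕ :=
  sInf {h | ∃ T : RootedForest V, IsTDDecomp G T ∧ T.height = h}

/-- `(T, f)` is a tree decomposition of `G`. -/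
def IsTreeDecomp {V ι : Type} (G : SimpleGraph V) (T : SimpleGraph ι)
    (f : ι → Finset V) : Prop :=
  T.IsTree ∧
  (∀ v, ∃ i, v ∈ f i) ∧
  (∀ u v, G.Adj u v → ∃ i, u ∈ f i ∧ v ∈ f i) ∧
  (∀ v, (T.induce {i | v ∈ f i}).Connected)

/-- The treewidth of a finite graph: the minimum over all tree decompositions of
(maximum bag size minus one), phrased as the least `w` such that `G` has a tree
decomposition all of whose bags have at most `w + 1` vertices. -/
def treewidth {V : Type} [Fintype V] (G : SimpleGraph V) : ℕ :=
  sInf {w | ∃ (ι : Type) (_ : Fintype ι) (T : SimpleGraph ι) (f : ι → Finset V),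
    IsTreeDecomp G T f ∧ ∀ i, (f i).card ≤ w + 1}

/-- `S` is an `a`-`b` separator of `G`: `a, b ∉ S` and every walk from `a` to `b`
meets `S` (i.e. `a` and `b` lie in different connected components of `G ∖ S`). -/
def IsABSep {V : Type} (G : SimpleGraph V) (a b : V) (S : Finset V) : Prop :=
  a ∉ S ∧ b ∉ S ∧ ∀ w : G.Walk a b, ∃ x ∈ w.support, x ∈ S

/-- `S` is a minimal separator of `G`: for some vertices `a, b`, it is an
`a`-`b` separator no proper subset of which is an `a`-`b` separator. -/
def IsMinSep {V : Type} (G : SimpleGraph V) (S : Finset V) : Prop :=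
  ∃ a b, IsABSep G a b S ∧ ∀ S' ⊂ S, ¬ IsABSep G a b S'

/-- The grid graph `P_m × P_n`, with vertex set
`{(i,j) : 1 ≤ i ≤ n, 1 ≤ j ≤ m}` and edges between vertices at ℓ1-distance 1. -/
def gridGraph (n m : ℕ) : SimpleGraph (Fin n × Fin m) where
  Adj a b := Nat.dist a.1.val b.1.val + Nat.dist a.2.val b.2.val = 1
  symm := ⟨by
    intro a b h
    try dsimp only at h ⊢
    rwa [Nat.dist_comm b.1.val, Nat.dist_comm b.2.val]⟩
  loopless := ⟨by intro a h; simp [Nat.dist_self] at h⟩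


/-- Vertices of the broom: grid vertices plus, for each row `i`, a path on `2^k - 1` vertices. -/
abbrev BroomV (n m k : ℕ) : Type := (Fin n × Fin m) ⊕ (Fin n × Fin (2 ^ k - 1))

/-- The broom `B_{n,m,k}`. -/
def broom (n m k : ℕ) : SimpleGraph (BroomV n m k) :=
  SimpleGraph.fromRel (fun x y =>
    match x, y with
    | .inl a, .inl b => (gridGraph n m).Adj a b
    | .inl a, .inr b => a.1 = b.1 ∧ a.2.val = m - 1 ∧ b.2.val = 0
    | .inr a, .inr b => a.1 = b.1 ∧ a.2.val + 1 = b.2.val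
    | .inr _, .inl _ => False)

/-- Vertices of the double broom: grid vertices plus, for each row `i`, a path
attached at `(i,1)` (first summand) and a path attached at `(i,m)` (second summand). -/
abbrev DBroomV (n m k : ℕ) : Type :=
  (Fin n × Fin m) ⊕ (Fin n × Fin (2 ^ k - 1)) ⊕ (Fin n × Fin (2 ^ k - 1))

/-- The double broom `D_{n,m,k}`. -/
def dbroom (n m k : ℕ) : SimpleGraph (DBroomV n m k) :=
  SimpleGraph.fromRel (fun x y =>
    match x, y with
    | .inl a, .inl b => (gridGraph n m).Adj a b
    | .inl a, .inr (.inl b) => a.1 = b.1 ∧ a.2.val = 0 ∧ b.2.val = 0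
    | .inl a, .inr (.inr b) => a.1 = b.1 ∧ a.2.val = m - 1 ∧ b.2.val = 0
    | .inr (.inl a), .inr (.inl b) => a.1 = b.1 ∧ a.2.val + 1 = b.2.val
    | .inr (.inr a), .inr (.inr b) => a.1 = b.1 ∧ a.2.val + 1 = b.2.val
    | _, _ => False)

/-- Vertices of the graph `G_{n,m,k,l}`: grid vertices, plus a path on `2^k - 1`
vertices for every triple (row `i`, end `e ∈ {1,m}`, vertex `w ∈ W`), plus the
set `W` of `l` new vertices. -/
abbrev CornerV (n m k l : ℕ) : Type :=
  (Fin n × Fin m) ⊕ ((Fin n × Fin 2 × Fin l) × Fin (2 ^ k - 1)) ⊕ Fin l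

/-- The graph `G_{n,m,k,l}`. -/
def corner (n m k l : ℕ) : SimpleGraph (CornerV n m k l) :=
  SimpleGraph.fromRel (fun x y =>
    match x, y with
    | .inl a, .inl b => (gridGraph n m).Adj a b
    | .inl a, .inr (.inl (⟨i, e, _⟩, t)) =>
        a.1 = i ∧ t.val = 0 ∧
          ((e.val = 0 ∧ a.2.val = 0) ∨ (e.val = 1 ∧ a.2.val = m - 1))
    | .inr (.inl (p, t)), .inr (.inl (q, s)) => p = q ∧ t.val + 1 = s.val
    | .inr (.inl (⟨_, _, w⟩, t)), .inr (.inr w') => w = w' ∧ t.val = 2 ^ k - 2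
    | _, _ => False)

/-- `H` is a minor of `G`: there are pairwise disjoint connected branch sets in
`G`, one for each vertex of `H`, such that adjacent vertices of `H` have
adjacent branch sets. -/
def IsMinor {W V : Type} (H : SimpleGraph W) (G : SimpleGraph V) : Prop :=
  ∃ B : W → Set V,
    (∀ w, (G.induce (B w)).Connected) ∧
    (∀ w w', w ≠ w' → Disjoint (B w) (B w')) ∧
    (∀ w w', H.Adj w w' → ∃ u ∈ B w, ∃ v ∈ B w', G.Adj u v)

/-- A graph is chordal if it has no induced cycle of length four or more. -/
def IsChordal {V : Type} (G : SimpleGraph V) : Prop :=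
  ∀ c : ℕ, 4 ≤ c → IsEmpty (SimpleGraph.cycleGraph c ↪g G)

/-- A graph is a cograph if it has no induced path on four vertices. -/
def IsCograph {V : Type} (G : SimpleGraph V) : Prop :=
  IsEmpty (SimpleGraph.pathGraph 4 ↪g G)

/-- A graph is outerplanar iff it contains neither `K₄` nor `K_{2,3}` as a minor. -/
def IsOuterplanar {V : Type} (G : SimpleGraph V) : Prop :=
  ¬ IsMinor (⊤ : SimpleGraph (Fin 4)) G ∧
  ¬ IsMinor (completeBipartiteGraph (Fin 2) (Fin 3)) G

/-- The graph obtained from `G'` and the path on `p` vertices by adding a single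
edge between `u ∈ V(G')` and a path vertex `v`. -/
def attachPath {V' : Type} (G' : SimpleGraph V') (p : ℕ) (u : V') (v : Fin p) :
    SimpleGraph (V' ⊕ Fin p) :=
  SimpleGraph.fromRel (fun x y =>
    match x, y with
    | .inl a, .inl b => G'.Adj a b
    | .inr a, .inr b => a.val + 1 = b.val
    | .inl a, .inr b => a = u ∧ b = v
    | .inr _, .inl _ => False)


section Helpers

namespace RootedForest

variable {V : Type}

-- helpers
variable (T : RootedForest V)

lemma depth_pos (v : V) : 1 ≤ T.depth v := by
  cases h : T.parent v with
  | none => rw [T.depth_root v h]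
  | some u => rw [T.depth_parent v u h]; omega

lemma depth_le_of_rt {x y : V}
    (h : Relation.ReflTransGen (fun a b => T.parent a = some b) x y) :
    T.depth y ≤ T.depth x := by
  induction h with
  | refl => exact le_rfl
  | tail _ hstep ih => rw [T.depth_parent _ _ hstep] at *; omega

lemma depth_lt_of_rt {x y : V}
    (h : Relation.ReflTransGen (fun a b => T.parent a = some b) x y) (hne : x ≠ y) :
    T.depth y < T.depth x := by
  rcases h.cases_head with rfl | ⟨b, hb, hby⟩
  · exact absurd rfl hne
  · have := T.depth_le_of_rt hby
    rw [T.depth_parent _ _ hb] at *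
    omega

lemma anc_antisymm {x y : V} (h1 : T.Ancestor x y) (h2 : T.Ancestor y x) : x = y := by
  by_contra hne
  have a := T.depth_lt_of_rt h1 (Ne.symm hne)
  have b := T.depth_lt_of_rt h2 hne
  omega

lemma rt_total {x y z : V}
    (hxy : Relation.ReflTransGen (fun a b => T.parent a = some b) x y)
    (hxz : Relation.ReflTransGen (fun a b => T.parent a = some b) x z) :
    T.Ancestor z y ∨ T.Ancestor y z := by
  induction hxy using Relation.ReflTransGen.head_induction_on with
  | refl => exact Or.inl hxz
  | @head a c hstep htail ih =>
    rcases hxz.cases_head with rfl | ⟨d, hd, hdz⟩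
    · exact Or.inr (Relation.ReflTransGen.head hstep htail)
    · rw [hstep] at hd
      injection hd with hd
      subst hd
      exact ih hdz

lemma anc_total {u w v : V} (h1 : T.Ancestor u v) (h2 : T.Ancestor w v) :
    T.Ancestor u w ∨ T.Ancestor w u :=
  T.rt_total h2 h1

lemma anc_unique {u w v : V} (h1 : T.Ancestor u v) (h2 : T.Ancestor w v)
    (hd : T.depth u = T.depth w) : u = w := by
  rcases T.anc_total h1 h2 with h | h
  · by_contra hne
    have := T.depth_lt_of_rt h (fun e => hne e.symm)
    omega
  · by_contra hne
    have := T.depth_lt_of_rt h hne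
    omega

/-- strict ancestors -/
def sAnc (v : V) : Set V := {u | u ≠ v ∧ T.Ancestor u v}

lemma sAnc_root {v : V} (h : T.parent v = none) : T.sAnc v = ∅ := by
  ext x
  simp only [sAnc, Set.mem_setOf_eq, Set.mem_empty_iff_false, iff_false, not_and]
  intro hx hanc
  rcases hanc.cases_head with rfl | ⟨b, hb, _⟩
  · exact hx rfl
  · rw [h] at hb; exact absurd hb (by simp)

lemma not_mem_sAnc (v : V) : v ∉ T.sAnc v := fun h => h.1 rfl

lemma sAnc_parent {v u : V} (h : T.parent v = some u) :
    T.sAnc v = insert u (T.sAnc u) := by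
  have hvu : T.depth v = T.depth u + 1 := T.depth_parent v u h
  ext x
  simp only [sAnc, Set.mem_setOf_eq, Set.mem_insert_iff]
  constructor
  · rintro ⟨hx, hanc⟩
    rcases hanc.cases_head with rfl | ⟨b, hb, hbx⟩
    · exact absurd rfl hx
    · rw [h] at hb; injection hb with hb; subst hb
      by_cases hxu : x = u
      · exact Or.inl hxu
      · exact Or.inr ⟨hxu, hbx⟩
  · rintro (rfl | ⟨hxu, hanc⟩)
    · refine ⟨?_, Relation.ReflTransGen.single h⟩
      rintro rfl
      omega
    · refine ⟨?_, Relation.ReflTransGen.head h hanc⟩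
      rintro rfl
      have := T.depth_le_of_rt hanc
      omega

lemma depth_eq_sAnc [Finite V] : ∀ n (v : V), T.depth v = n → T.depth v = 1 + (T.sAnc v).ncard := by
  intro n
  induction n using Nat.strong_induction_on with
  | _ n ih =>
    intro v hv
    cases h : T.parent v with
    | none => rw [T.sAnc_root h, Set.ncard_empty, T.depth_root v h]
    | some u =>
      have hd : T.depth v = T.depth u + 1 := T.depth_parent v u h
      have hu := ih (T.depth u) (by omega) u rfl
      rw [T.sAnc_parent h, Set.ncard_insert_of_notMem (T.not_mem_sAnc u) (Set.toFinite _)]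
      omega

lemma depth_eq_sAnc' [Finite V] (v : V) : T.depth v = 1 + (T.sAnc v).ncard :=
  T.depth_eq_sAnc _ v rfl

lemma anc_at_depth : ∀ n (v : V), T.depth v = n → ∀ i, 1 ≤ i → i ≤ T.depth v →
    ∃ a, T.Ancestor a v ∧ T.depth a = i := by
  intro n
  induction n using Nat.strong_induction_on with
  | _ n ih =>
    intro v hv i h1 h2
    rcases eq_or_lt_of_le h2 with he | hlt
    · exact ⟨v, Relation.ReflTransGen.refl, he.symm⟩
    · cases h : T.parent v with
      | none => have := T.depth_root v h; omega
      | some u =>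
        have hd : T.depth v = T.depth u + 1 := T.depth_parent v u h
        obtain ⟨a, ha, hda⟩ := ih (T.depth u) (by omega) u rfl i h1 (by omega)
        exact ⟨a, ha.head h, hda⟩

lemma root_anc : ∀ n (v : V), T.depth v = n → ∃ r, T.Ancestor r v ∧ T.parent r = none := by
  intro n
  induction n using Nat.strong_induction_on with
  | _ n ih =>
    intro v hv
    cases h : T.parent v with
    | none => exact ⟨v, Relation.ReflTransGen.refl, h⟩
    | some u =>
      have hd : T.depth v = T.depth u + 1 := T.depth_parent v u h
      obtain ⟨r, hr, hr0⟩ := ih (T.depth u) (by omega) u rfl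
      exact ⟨r, hr.head h, hr0⟩



/-- nearest strict ancestor inside `K` -/
def skip (T : RootedForest V) (K : Set V) (v : V) : Option ↥K :=
  match h : T.parent v with
  | none => none
  | some u =>
    if hu : u ∈ K then some ⟨u, hu⟩ else T.skip K u
termination_by T.depth v
decreasing_by
  have := T.depth_parent v u h; omega

lemma skip_none (T : RootedForest V) (K : Set V) :
    ∀ n (v : V), T.depth v = n → T.skip K v = none → T.sAnc v ∩ K = ∅ := by
  intro n
  induction n using Nat.strong_induction_on with
  | _ n ih =>
    intro v hv hs
    rw [skip] at hs
    split at hs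
    · next h => rw [T.sAnc_root h]; exact Set.empty_inter K
    · next u h =>
      by_cases hu : u ∈ K
      · rw [dif_pos hu] at hs; exact absurd hs (by simp)
      · rw [dif_neg hu] at hs
        have hd := T.depth_parent v u h
        have := ih (T.depth u) (by omega) u rfl hs
        rw [T.sAnc_parent h, Set.insert_inter_of_notMem hu, this]

lemma skip_some (T : RootedForest V) (K : Set V) :
    ∀ n (v : V), T.depth v = n → ∀ (u : ↥K), T.skip K v = some u →
      T.sAnc v ∩ K = insert ↑u (T.sAnc ↑u ∩ K) ∧ (↑u : V) ∈ T.sAnc v := by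
  intro n
  induction n using Nat.strong_induction_on with
  | _ n ih =>
    intro v hv u hs
    rw [skip] at hs
    split at hs
    · exact absurd hs (by simp)
    · next w h =>
      have hd := T.depth_parent v w h
      by_cases hw : w ∈ K
      · rw [dif_pos hw] at hs
        injection hs with hs
        subst hs
        constructor
        · rw [T.sAnc_parent h, Set.insert_inter_of_mem hw]
        · rw [T.sAnc_parent h]; exact Set.mem_insert _ _
      · rw [dif_neg hw] at hs
        obtain ⟨h1, h2⟩ := ih (T.depth w) (by omega) w rfl u hs
        rw [T.sAnc_parent h, Set.insert_inter_of_notMem hw]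
        exact ⟨h1, Set.mem_insert_of_mem _ h2⟩


def delForest (T : RootedForest V) [Finite V] (K : Set V) : RootedForest ↥K where
  parent v := T.skip K ↑v
  depth v := 1 + (T.sAnc ↑v ∩ K).ncard
  depth_root := by
    intro v h
    have h' : T.skip K ↑v = none := h
    rw [T.skip_none K _ ↑v rfl h', Set.ncard_empty]
  depth_parent := by
    intro v u h
    have h' : T.skip K ↑v = some u := h
    obtain ⟨h1, _⟩ := T.skip_some K _ ↑v rfl u h'
    rw [h1, Set.ncard_insert_of_notMem (fun hc => T.not_mem_sAnc ↑u hc.1) (Set.toFinite _)]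
    omega

lemma delForest_depth (T : RootedForest V) [Finite V] (K : Set V) (v : ↥K) :
    (T.delForest K).depth v = 1 + (T.sAnc ↑v ∩ K).ncard := rfl

lemma del_anc (T : RootedForest V) [Finite V] (K : Set V) :
    ∀ n (v : V), T.depth v = n → ∀ (hv : v ∈ K) (u : V) (hu : u ∈ K), T.Ancestor u v →
      (T.delForest K).Ancestor ⟨u, hu⟩ ⟨v, hv⟩ := by
  intro n
  induction n using Nat.strong_induction_on with
  | _ n ih =>
    intro v hv hvK u huK hanc
    by_cases he : u = v
    · subst he; exact Relation.ReflTransGen.refl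
    · have humem : u ∈ T.sAnc v ∩ K := ⟨⟨he, hanc⟩, huK⟩
      cases hs : T.skip K v with
      | none =>
        rw [T.skip_none K _ v rfl hs] at humem
        exact absurd humem (Set.notMem_empty u)
      | some w =>
        obtain ⟨h1, h2⟩ := T.skip_some K _ v rfl w hs
        rw [h1] at humem
        have hstep : (T.delForest K).parent ⟨v, hvK⟩ = some w := hs
        rcases humem with heq | humem'
        · have hw : (⟨u, huK⟩ : ↥K) = w := Subtype.ext heq
          rw [hw]
          exact Relation.ReflTransGen.single hstep
        · have hdw : T.depth ↑w < T.depth v := T.depth_lt_of_rt h2.2 (fun e => h2.1 e.symm)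
          have := ih (T.depth ↑w) (by omega) ↑w rfl w.2 u huK humem'.1.2
          exact Relation.ReflTransGen.head hstep this

end RootedForest

/-- every graph has some treedepth decomposition -/
def lineForest (V : Type) [Fintype V] : RootedForest V where
  parent v :=
    if h : ((Fintype.equivFin V) v : ℕ) = 0 then none
    else some ((Fintype.equivFin V).symm ⟨((Fintype.equivFin V) v : ℕ) - 1,
      by have := ((Fintype.equivFin V) v).isLt; omega⟩)
  depth v := ((Fintype.equivFin V) v : ℕ) + 1
  depth_root := by
    intro v h
    by_cases h0 : ((Fintype.equivFin V) v : ℕ) = 0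
    · omega
    · rw [dif_neg h0] at h; exact absurd h (by simp)
  depth_parent := by
    intro v u h
    by_cases h0 : ((Fintype.equivFin V) v : ℕ) = 0
    · rw [dif_pos h0] at h; exact absurd h (by simp)
    · rw [dif_neg h0] at h
      injection h with h
      subst h
      rw [Equiv.apply_symm_apply]
      simp only [Fin.val_mk]
      omega

lemma lineForest_anc (V : Type) [Fintype V] :
    ∀ n (v u : V), ((Fintype.equivFin V) v : ℕ) = n →
      ((Fintype.equivFin V) u : ℕ) ≤ ((Fintype.equivFin V) v : ℕ) →
      (lineForest V).Ancestor u v := by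
  intro n
  induction n using Nat.strong_induction_on with
  | _ n ih =>
    intro v u hv hle
    rcases eq_or_lt_of_le hle with he | hlt
    · have : u = v := (Fintype.equivFin V).injective (Fin.ext he)
      subst this; exact Relation.ReflTransGen.refl
    · have h0 : ((Fintype.equivFin V) v : ℕ) ≠ 0 := by omega
      set w := (Fintype.equivFin V).symm ⟨((Fintype.equivFin V) v : ℕ) - 1,
        by have := ((Fintype.equivFin V) v).isLt; omega⟩ with hw
      have hstep : (lineForest V).parent v = some w := dif_neg h0
      have hwv : ((Fintype.equivFin V) w : ℕ) = ((Fintype.equivFin V) v : ℕ) - 1 := by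
        rw [hw, Equiv.apply_symm_apply]
      have := ih ((Fintype.equivFin V) w : ℕ) (by omega) w u rfl (by omega)
      exact Relation.ReflTransGen.head hstep this

lemma lineForest_decomp {V : Type} [Fintype V] (G : SimpleGraph V) :
    IsTDDecomp G (lineForest V) := by
  intro u v _
  rcases le_total ((Fintype.equivFin V) u : ℕ) ((Fintype.equivFin V) v : ℕ) with h | h
  · exact Or.inl (lineForest_anc V _ v u rfl h)
  · exact Or.inr (lineForest_anc V _ u v rfl h)

lemma lineForest_height (V : Type) [Fintype V] : (lineForest V).height ≤ Fintype.card V := by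
  apply Finset.sup_le
  intro v _
  show ((Fintype.equivFin V) v : ℕ) + 1 ≤ Fintype.card V
  have := ((Fintype.equivFin V) v).isLt
  omega

lemma td_nonempty {V : Type} [Fintype V] (G : SimpleGraph V) :
    {h | ∃ T : RootedForest V, IsTDDecomp G T ∧ T.height = h}.Nonempty :=
  ⟨_, lineForest V, lineForest_decomp G, rfl⟩

lemma treedepth_le_height {V : Type} [Fintype V] (G : SimpleGraph V) (T : RootedForest V)
    (hT : IsTDDecomp G T) : treedepth G ≤ T.height :=
  Nat.sInf_le ⟨T, hT, rfl⟩

lemma treedepth_le_card {V : Type} [Fintype V] (G : SimpleGraph V) :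
    treedepth G ≤ Fintype.card V :=
  le_trans (treedepth_le_height G _ (lineForest_decomp G)) (lineForest_height V)

lemma exists_optimal {V : Type} [Fintype V] (G : SimpleGraph V) :
    ∃ T : RootedForest V, IsTDDecomp G T ∧ T.height = treedepth G :=
  Nat.sInf_mem (td_nonempty G)

lemma del_decomp {V : Type} [Fintype V] (G : SimpleGraph V) (T : RootedForest V)
    (hT : IsTDDecomp G T) (K : Set V) :
    IsTDDecomp (G.induce K) (T.delForest K) := by
  intro u v hadj
  have hG : G.Adj ↑u ↑v := hadj
  rcases hT _ _ hG with h | h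
  · exact Or.inl (RootedForest.del_anc T K _ ↑v rfl v.2 ↑u u.2 h)
  · exact Or.inr (RootedForest.del_anc T K _ ↑u rfl u.2 ↑v v.2 h)

end Helpers

section Helpers2

variable {V : Type}

/-- stacking a path on `S` on top of a forest on the complement -/
def stackForest (S : Finset V) (T' : RootedForest {v : V | v ∉ S}) : RootedForest V where
  parent v :=
    if h : v ∈ S then
      if hi : (S.equivFin ⟨v, h⟩ : ℕ) = 0 then none
      else some ↑(S.equivFin.symm ⟨(S.equivFin ⟨v, h⟩ : ℕ) - 1,
        by have := (S.equivFin ⟨v, h⟩).isLt; omega⟩)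
    else
      match T'.parent ⟨v, h⟩ with
      | some u => some ↑u
      | none =>
        if hk : S.card = 0 then none
        else some ↑(S.equivFin.symm ⟨S.card - 1, by omega⟩)
  depth v := if h : v ∈ S then (S.equivFin ⟨v, h⟩ : ℕ) + 1 else S.card + T'.depth ⟨v, h⟩
  depth_root := by
    intro v h
    by_cases hv : v ∈ S
    · rw [dif_pos hv] at h ⊢
      by_cases hi : (S.equivFin ⟨v, hv⟩ : ℕ) = 0
      · omega
      · rw [dif_neg hi] at h; exact absurd h (by simp)
    · rw [dif_neg hv] at h ⊢
      cases hp : T'.parent ⟨v, hv⟩ with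
      | some u => simp only [hp] at h; exact absurd h (by simp)
      | none =>
        simp only [hp] at h
        by_cases hk : S.card = 0
        · have := T'.depth_root _ hp; omega
        · rw [dif_neg hk] at h; exact absurd h (by simp)
  depth_parent := by
    intro v u h
    by_cases hv : v ∈ S
    · rw [dif_pos hv] at h ⊢
      by_cases hi : (S.equivFin ⟨v, hv⟩ : ℕ) = 0
      · rw [dif_pos hi] at h; exact absurd h (by simp)
      · rw [dif_neg hi] at h
        injection h with h
        subst h
        rw [dif_pos (S.equivFin.symm _).2, Subtype.coe_eta, Equiv.apply_symm_apply]
        simp only [Fin.val_mk]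
        omega
    · rw [dif_neg hv] at h ⊢
      cases hp : T'.parent ⟨v, hv⟩ with
      | some w =>
        simp only [hp] at h
        injection h with h
        subst h
        have h2 := T'.depth_parent _ _ hp
        rw [dif_neg (by exact w.2 : ¬ (↑w : V) ∈ S), Subtype.coe_eta]
        omega
      | none =>
        simp only [hp] at h
        by_cases hk : S.card = 0
        · rw [dif_pos hk] at h; exact absurd h (by simp)
        · rw [dif_neg hk] at h
          injection h with h
          subst h
          rw [dif_pos (S.equivFin.symm _).2, Subtype.coe_eta, Equiv.apply_symm_apply]
          simp only [Fin.val_mk]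
          have := T'.depth_root _ hp
          omega

lemma stack_parent_mem (S : Finset V) (T' : RootedForest {v : V | v ∉ S}) {v : V} (hv : v ∈ S) :
    (stackForest S T').parent v =
      if hi : (S.equivFin ⟨v, hv⟩ : ℕ) = 0 then none
      else some ↑(S.equivFin.symm ⟨(S.equivFin ⟨v, hv⟩ : ℕ) - 1,
        by have := (S.equivFin ⟨v, hv⟩).isLt; omega⟩) :=
  dif_pos hv

lemma stack_parent_notmem (S : Finset V) (T' : RootedForest {v : V | v ∉ S}) {v : V} (hv : ¬ v ∈ S) :
    (stackForest S T').parent v =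
      match T'.parent ⟨v, hv⟩ with
      | some u => some ↑u
      | none =>
        if _ : S.card = 0 then none
        else some ↑(S.equivFin.symm ⟨S.card - 1, by omega⟩) :=
  dif_neg hv

lemma stack_anc_fin (S : Finset V) (T' : RootedForest {v : V | v ∉ S}) :
    ∀ j (hj : j < S.card) i (hij : i ≤ j),
      (stackForest S T').Ancestor ↑(S.equivFin.symm ⟨i, by omega⟩) ↑(S.equivFin.symm ⟨j, hj⟩) := by
  intro j
  induction j with
  | zero =>
    intro hj i hij
    have : i = 0 := by omega
    subst this
    exact Relation.ReflTransGen.refl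
  | succ j ihj =>
    intro hj i hij
    by_cases hi : i = j + 1
    · subst hi; exact Relation.ReflTransGen.refl
    · have hstep : (stackForest S T').parent ↑(S.equivFin.symm ⟨j + 1, hj⟩) =
          some ↑(S.equivFin.symm ⟨j, by omega⟩) := by
        rw [stack_parent_mem S T' (S.equivFin.symm _).2]
        rw [dif_neg (by rw [Subtype.coe_eta, Equiv.apply_symm_apply]; simp)]
        congr 1
        congr 1
        congr 1
        exact Fin.ext (by simp)
      exact Relation.ReflTransGen.head hstep (ihj (by omega) i (by omega))

lemma stack_anc_mem (S : Finset V) (T' : RootedForest {v : V | v ∉ S}) {s u : V}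
    (hs : s ∈ S) (hu : u ∈ S) (hle : (S.equivFin ⟨s, hs⟩ : ℕ) ≤ (S.equivFin ⟨u, hu⟩ : ℕ)) :
    (stackForest S T').Ancestor s u := by
  have h := stack_anc_fin S T' (S.equivFin ⟨u, hu⟩ : ℕ) (S.equivFin ⟨u, hu⟩).isLt
    (S.equivFin ⟨s, hs⟩ : ℕ) hle
  simpa only [Fin.eta, Equiv.symm_apply_apply] using h

lemma stack_to_last (S : Finset V) (T' : RootedForest {v : V | v ∉ S}) (hk : S.card ≠ 0) :
    ∀ n (v : V) (hv : ¬ v ∈ S), T'.depth ⟨v, hv⟩ = n →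
      Relation.ReflTransGen (fun a b => (stackForest S T').parent a = some b) v
        ↑(S.equivFin.symm ⟨S.card - 1, by omega⟩) := by
  intro n
  induction n using Nat.strong_induction_on with
  | _ n ih =>
    intro v hv hd
    cases hp : T'.parent ⟨v, hv⟩ with
    | none =>
      have hstep : (stackForest S T').parent v = some ↑(S.equivFin.symm ⟨S.card - 1, by omega⟩) := by
        rw [stack_parent_notmem S T' hv]
        simp only [hp]
        rw [dif_neg hk]
      exact Relation.ReflTransGen.single hstep
    | some w =>
      have hstep : (stackForest S T').parent v = some ↑w := by
        rw [stack_parent_notmem S T' hv]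
        simp only [hp]
      have hdw := T'.depth_parent _ _ hp
      exact Relation.ReflTransGen.head hstep (ih (T'.depth w) (by omega) ↑w w.2 (by rw [Subtype.coe_eta]))

lemma stack_anc_mem_notmem (S : Finset V) (T' : RootedForest {v : V | v ∉ S}) {s v : V}
    (hs : s ∈ S) (hv : ¬ v ∈ S) : (stackForest S T').Ancestor s v := by
  have hk : S.card ≠ 0 := Finset.card_ne_zero_of_mem hs
  have h1 := stack_to_last S T' hk _ v hv rfl
  have h2 : (stackForest S T').Ancestor s ↑(S.equivFin.symm ⟨S.card - 1, by omega⟩) := by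
    apply stack_anc_mem S T' hs (S.equivFin.symm _).2
    rw [Subtype.coe_eta, Equiv.apply_symm_apply]
    have := (S.equivFin ⟨s, hs⟩).isLt
    simp only [Fin.val_mk]
    omega
  exact Relation.ReflTransGen.trans h1 h2

lemma stack_anc_lift (S : Finset V) (T' : RootedForest {v : V | v ∉ S})
    {u w : {v : V | v ∉ S}} (h : T'.Ancestor u w) :
    (stackForest S T').Ancestor ↑u ↑w := by
  refine Relation.ReflTransGen.lift (Subtype.val) ?_ _ _ h
  intro x y hxy
  show (stackForest S T').parent ↑x = some ↑y
  rw [stack_parent_notmem S T' x.2]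
  simp only [Subtype.coe_eta, hxy]

lemma stack_decomp {V : Type} [Fintype V] (G : SimpleGraph V) (S : Finset V)
    (T' : RootedForest {v : V | v ∉ S})
    (hT' : IsTDDecomp (G.induce {v : V | v ∉ S}) T') :
    IsTDDecomp G (stackForest S T') := by
  intro u v hadj
  by_cases hu : u ∈ S <;> by_cases hv : v ∈ S
  · rcases le_total ((S.equivFin ⟨u, hu⟩ : ℕ)) ((S.equivFin ⟨v, hv⟩ : ℕ)) with h | h
    · exact Or.inl (stack_anc_mem S T' hu hv h)
    · exact Or.inr (stack_anc_mem S T' hv hu h)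
  · exact Or.inl (stack_anc_mem_notmem S T' hu hv)
  · exact Or.inr (stack_anc_mem_notmem S T' hv hu)
  · have hadj' : (G.induce {v : V | v ∉ S}).Adj ⟨u, hu⟩ ⟨v, hv⟩ := hadj
    rcases hT' _ _ hadj' with h | h
    · exact Or.inl (stack_anc_lift S T' h)
    · exact Or.inr (stack_anc_lift S T' h)

lemma stack_height {V : Type} [Fintype V] (S : Finset V) (T' : RootedForest {v : V | v ∉ S}) :
    (stackForest S T').height ≤ S.card + T'.height := by
  apply Finset.sup_le
  intro v _
  show (if h : v ∈ S then (S.equivFin ⟨v, h⟩ : ℕ) + 1 else S.card + T'.depth ⟨v, h⟩) ≤ _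
  by_cases hv : v ∈ S
  · rw [dif_pos hv]
    have := (S.equivFin ⟨v, hv⟩).isLt
    omega
  · rw [dif_neg hv]
    have : T'.depth ⟨v, hv⟩ ≤ T'.height := Finset.le_sup (Finset.mem_univ _)
    omega

lemma td_le_sep {V : Type} [Fintype V] (G : SimpleGraph V) (S : Finset V) :
    treedepth G ≤ S.card + treedepth (G.induce {v : V | v ∉ S}) := by
  obtain ⟨T', hT', hh⟩ := exists_optimal (G.induce {v : V | v ∉ S})
  calc treedepth G ≤ (stackForest S T').height :=
        treedepth_le_height _ _ (stack_decomp G S T' hT')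
    _ ≤ S.card + T'.height := stack_height S T'
    _ = S.card + treedepth (G.induce {v : V | v ∉ S}) := by rw [hh]

lemma sep_nontrivial {V : Type} [Fintype V] (G : SimpleGraph V) {a b : V} (hab : a ≠ b)
    (hnadj : ¬ G.Adj a b) : IsABSep G a b (Finset.univ \ {a, b}) := by
  refine ⟨by simp, by simp, ?_⟩
  intro w
  cases w with
  | nil => exact absurd rfl hab
  | @cons _ x _ h p =>
    refine ⟨x, ?_, ?_⟩
    · exact List.mem_cons_of_mem _ p.start_mem_support
    · simp only [Finset.mem_sdiff, Finset.mem_univ, Finset.mem_insert, Finset.mem_singleton,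
        true_and]
      push_neg
      refine ⟨fun e => G.irrefl (e ▸ h), fun e => hnadj (e ▸ h)⟩

lemma exists_min_sep {V : Type} [Fintype V] (G : SimpleGraph V) {a b : V} {S0 : Finset V}
    (h : IsABSep G a b S0) :
    ∃ S, S ⊆ S0 ∧ IsABSep G a b S ∧ ∀ S' ⊂ S, ¬ IsABSep G a b S' := by
  obtain ⟨S, hS, hmin⟩ := Finset.exists_min_image
    (S0.powerset.filter fun S => IsABSep G a b S) Finset.card
    ⟨S0, by simp only [Finset.mem_filter, Finset.mem_powerset]; exact ⟨le_refl _, h⟩⟩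
  simp only [Finset.mem_filter, Finset.mem_powerset] at hS
  refine ⟨S, hS.1, hS.2, ?_⟩
  intro S' hss hsep
  have hmem : S' ∈ S0.powerset.filter fun S => IsABSep G a b S := by
    simp only [Finset.mem_filter, Finset.mem_powerset]
    exact ⟨le_trans (le_of_lt hss) hS.1, hsep⟩
  exact absurd (Finset.card_lt_card hss) (not_lt.2 (hmin S' hmem))

lemma del_height {V : Type} [Fintype V] (T : RootedForest V) (K : Set V) :
    (T.delForest K).height ≤ T.height := by
  apply Finset.sup_le
  intro v _
  rw [RootedForest.delForest_depth]
  have h1 : (T.sAnc ↑v ∩ K).ncard ≤ (T.sAnc ↑v).ncard :=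
    Set.ncard_le_ncard Set.inter_subset_left (Set.toFinite _)
  have h2 := T.depth_eq_sAnc' (↑v : V)
  have h3 : T.depth ↑v ≤ T.height := Finset.le_sup (Finset.mem_univ _)
  omega

lemma td_del_le {V : Type} [Fintype V] (G : SimpleGraph V) (T : RootedForest V)
    (hT : IsTDDecomp G T) (S : Finset V) :
    treedepth (G.induce {v : V | v ∉ S}) ≤ T.height := by
  have h1 := treedepth_le_height _ _ (del_decomp G T hT {v : V | v ∉ S})
  have h2 := del_height T {v : V | v ∉ S}
  have h3 : ∀ (i1 i2 : Fintype ↥{v : V | v ∉ S}),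
      @RootedForest.height _ (T.delForest {v : V | v ∉ S}) i1 =
      @RootedForest.height _ (T.delForest {v : V | v ∉ S}) i2 := by
    intro i1 i2; rw [Subsingleton.elim i1 i2]
  exact le_trans (le_trans h1 (le_of_eq (h3 _ _))) h2

lemma depth_injOn_low {V : Type} [Fintype V] (T : RootedForest V)
    (huniq : ∀ r1 r2, T.parent r1 = none → T.parent r2 = none → r1 = r2)
    (bar : ℕ) (hlow : ∀ q, 2 ≤ T.childCount q → bar ≤ T.depth q) :
    ∀ n, n ≤ bar → ∀ u v : V, T.depth u = n → T.depth v = n → u = v := by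
  intro n
  induction n using Nat.strong_induction_on with
  | _ n ih =>
    intro hn u v hu hv
    cases hpu : T.parent u with
    | none =>
      have h1 := T.depth_root u hpu
      cases hpv : T.parent v with
      | none => exact huniq u v hpu hpv
      | some w =>
        have h2 := T.depth_parent v w hpv
        have h3 := T.depth_pos w
        omega
    | some pu =>
      cases hpv : T.parent v with
      | none =>
        have h1 := T.depth_root v hpv
        have h2 := T.depth_parent u pu hpu
        have h3 := T.depth_pos pu
        omega
      | some pv =>
        have hdu := T.depth_parent u pu hpu
        have hdv := T.depth_parent v pv hpv
        have hpp : pu = pv := ih (T.depth pu) (by omega) (by omega) pu pv rfl (by omega)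
        by_contra hne
        have hcc : 2 ≤ T.childCount pu := by
          have hsub : ({u, v} : Finset V) ⊆ Finset.univ.filter (fun x => T.parent x = some pu) := by
            intro x hx
            simp only [Finset.mem_insert, Finset.mem_singleton] at hx
            rcases hx with rfl | rfl
            · simp [hpu]
            · simp [hpv, hpp]
          calc 2 = ({u, v} : Finset V).card := (Finset.card_pair hne).symm
            _ ≤ _ := Finset.card_le_card hsub
        have := hlow pu hcc
        omega

end Helpers2



/-- For a finite simple graph `G` that is not complete, the treedepth
of `G` equals the minimum, over all minimal separators `S` of `G`, of
`|S| + td(G ∖ S)`. -/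
theorem statement0 {V : Type} [Fintype V] (G : SimpleGraph V) (hG : G ≠ ⊤) :
    treedepth G =
      sInf {h : ℕ | ∃ S : Finset V, IsMinSep G S ∧
        h = S.card + treedepth (G.induce {v : V | v ∉ S})} := by
  obtain ⟨a, b, hab, hnadj⟩ : ∃ a b : V, a ≠ b ∧ ¬ G.Adj a b := by
    by_contra hc
    push_neg at hc
    apply hG
    ext u v
    simp only [top_adj]
    exact ⟨fun h => G.ne_of_adj h, fun h => hc u v h⟩
  obtain ⟨Sm, hSm0, hSmsep, hSmmin⟩ := exists_min_sep G (sep_nontrivial G hab hnadj)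
  have hSmMS : IsMinSep G Sm := ⟨a, b, hSmsep, hSmmin⟩
  have hne : {h : ℕ | ∃ S : Finset V, IsMinSep G S ∧
      h = S.card + treedepth (G.induce {v : V | v ∉ S})}.Nonempty := ⟨_, Sm, hSmMS, rfl⟩
  apply le_antisymm
  · refine le_csInf hne ?_
    rintro m ⟨S, _, rfl⟩
    exact td_le_sep G S
  · obtain ⟨T, hT, hTh⟩ := exists_optimal G
    rw [← hTh]
    by_cases hroots : ∃ r1 r2 : V, r1 ≠ r2 ∧ T.parent r1 = none ∧ T.parent r2 = none
    · -- empty separator case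
      obtain ⟨r1, r2, hr12, h1, h2⟩ := hroots
      have hwalk : ∀ {x y : V} (w : G.Walk x y), T.Ancestor r1 x → T.Ancestor r1 y := by
        intro x y w
        induction w with
        | nil => exact id
        | @cons xu xv xw hadj p ih =>
          intro hx
          apply ih
          rcases hT _ _ hadj with h | h
          · exact Relation.ReflTransGen.trans h hx
          · rcases T.anc_total hx h with hh | hh
            · exact hh
            · rcases hh.cases_head with heq | ⟨c, hc, _⟩
              · rw [heq]; exact Relation.ReflTransGen.refl
              · rw [h1] at hc; exact absurd hc (by simp)
      have hsepE : IsABSep G r1 r2 (∅ : Finset V) := by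
        refine ⟨Finset.notMem_empty _, Finset.notMem_empty _, ?_⟩
        intro w
        exfalso
        have hanc : T.Ancestor r1 r2 := hwalk w Relation.ReflTransGen.refl
        rcases hanc.cases_head with heq | ⟨c, hc, _⟩
        · exact hr12 heq.symm
        · rw [h2] at hc; exact absurd hc (by simp)
      have hmsE : IsMinSep G (∅ : Finset V) :=
        ⟨r1, r2, hsepE, fun S' hsub _ => (Finset.not_ssubset_empty S') hsub⟩
      have hmem : (∅ : Finset V).card + treedepth (G.induce {v : V | v ∉ (∅ : Finset V)}) ∈
          {h : ℕ | ∃ S : Finset V, IsMinSep G S ∧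
            h = S.card + treedepth (G.induce {v : V | v ∉ S})} := ⟨∅, hmsE, rfl⟩
      refine le_trans (Nat.sInf_le hmem) ?_
      have h3 := td_del_le G T hT (∅ : Finset V)
      simp only [Finset.card_empty]
      omega
    · push_neg at hroots
      have huniq : ∀ r1 r2 : V, T.parent r1 = none → T.parent r2 = none → r1 = r2 := by
        intro r1 r2 pr1 pr2
        by_contra hne'
        exact (hroots r1 r2 hne') pr1 pr2
      by_cases hbr : ∃ p, 2 ≤ T.childCount p
      · -- branching case
        obtain ⟨p0, hp0⟩ := hbr
        obtain ⟨ps, hpsmem, hpsmin⟩ := Finset.exists_min_image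
          (Finset.univ.filter fun q => 2 ≤ T.childCount q) T.depth
          ⟨p0, by simp only [Finset.mem_filter, Finset.mem_univ, true_and]; exact hp0⟩
        have hps2 : 2 ≤ T.childCount ps := (Finset.mem_filter.1 hpsmem).2
        set dstar := T.depth ps with hds
        have hdmin : ∀ q, 2 ≤ T.childCount q → dstar ≤ T.depth q := fun q hq =>
          hpsmin q (by simp only [Finset.mem_filter, Finset.mem_univ, true_and]; exact hq)
        obtain ⟨c1, hc1, c2, hc2, hcne⟩ := Finset.one_lt_card.1 (lt_of_lt_of_le one_lt_two hps2)
        have hpc1 : T.parent c1 = some ps := (Finset.mem_filter.1 hc1).2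
        have hpc2 : T.parent c2 = some ps := (Finset.mem_filter.1 hc2).2
        have hd1 : T.depth c1 = dstar + 1 := by rw [T.depth_parent c1 ps hpc1]
        have hd2 : T.depth c2 = dstar + 1 := by rw [T.depth_parent c2 ps hpc2]
        have hinjP := depth_injOn_low T huniq dstar hdmin
        set P : Finset V := Finset.univ.filter (fun v => T.depth v ≤ dstar) with hP
        have hc1P : c1 ∉ P := by simp only [hP, Finset.mem_filter, Finset.mem_univ, true_and]; omega
        have hc2P : c2 ∉ P := by simp only [hP, Finset.mem_filter, Finset.mem_univ, true_and]; omega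
        have hwlk : ∀ (x y : V) (w : G.Walk x y), (∀ z ∈ w.support, dstar < T.depth z) →
            T.Ancestor c1 x → T.Ancestor c1 y := by
          intro x y w
          induction w with
          | nil => exact fun _ => id
          | @cons xu xv xw hadj p ih =>
            intro hsup hx
            have hzsup : ∀ z' ∈ p.support, dstar < T.depth z' := fun z' hz' =>
              hsup z' (by rw [SimpleGraph.Walk.support_cons]; exact List.mem_cons_of_mem _ hz')
            apply ih hzsup
            rcases hT _ _ hadj with h | h
            · exact Relation.ReflTransGen.trans h hx
            · rcases T.anc_total hx h with hh | hh
              · exact hh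
              · have hdz : dstar < T.depth xv := hzsup xv p.start_mem_support
                have hdz2 : T.depth xv ≤ T.depth c1 := T.depth_le_of_rt hh
                have hz : xv = c1 := T.anc_unique hh Relation.ReflTransGen.refl (by omega)
                rw [hz]
                exact Relation.ReflTransGen.refl
        have hsepP : IsABSep G c1 c2 P := by
          refine ⟨hc1P, hc2P, ?_⟩
          intro w
          by_contra hcon
          push_neg at hcon
          have hanc : T.Ancestor c1 c2 := by
            refine hwlk _ _ w ?_ Relation.ReflTransGen.refl
            intro z hz
            have := hcon z hz
            simp only [hP, Finset.mem_filter, Finset.mem_univ, true_and] at this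
            omega
          exact hcne (T.anc_unique hanc Relation.ReflTransGen.refl (by omega))
        obtain ⟨S, hSsub, hSsep, hSmin⟩ := exists_min_sep G hsepP
        have hSMS : IsMinSep G S := ⟨c1, c2, hSsep, hSmin⟩
        have hmem : S.card + treedepth (G.induce {v : V | v ∉ S}) ∈
          {h : ℕ | ∃ S : Finset V, IsMinSep G S ∧
            h = S.card + treedepth (G.induce {v : V | v ∉ S})} := ⟨S, hSMS, rfl⟩
        refine le_trans (Nat.sInf_le hmem) ?_
        have hdec := del_decomp G T hT {v : V | v ∉ S}
        have hd3 : treedepth (G.induce {v : V | v ∉ S}) ≤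
            (T.delForest {v : V | v ∉ S}).height := treedepth_le_height _ _ hdec
        have hdepthS : ∀ s ∈ S, T.depth s ≤ dstar := by
          intro s hs
          have := hSsub hs
          simp only [hP, Finset.mem_filter, Finset.mem_univ, true_and] at this
          exact this
        have hanc_of_low : ∀ s v : V, T.depth s ≤ dstar → T.depth s < T.depth v →
            s ∈ T.sAnc v := by
          intro s v hsd hlt
          obtain ⟨aa, ha, hda⟩ := T.anc_at_depth _ v rfl (T.depth s) (T.depth_pos s) (le_of_lt hlt)
          have haa : aa = s := hinjP (T.depth s) hsd aa s hda rfl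
          subst haa
          exact ⟨fun e => by rw [e] at hlt; omega, ha⟩
        have hds_le : dstar ≤ T.height := by
          rw [hds]; exact Finset.le_sup (Finset.mem_univ _)
        have hbound : ∀ v : ↥{v : V | v ∉ S},
            (T.delForest {v : V | v ∉ S}).depth v + S.card ≤ T.height := by
          intro v
          rw [RootedForest.delForest_depth]
          have hvK : (↑v : V) ∉ S := v.2
          have hvd : T.depth ↑v ≤ T.height := Finset.le_sup (Finset.mem_univ _)
          have hsplitA : (T.sAnc ↑v ∩ ↑S).ncard + (T.sAnc ↑v ∩ {v : V | v ∉ S}).ncard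
              = (T.sAnc ↑v).ncard := by
            have he : T.sAnc ↑v ∩ {v : V | v ∉ S} = T.sAnc ↑v \ ↑S := by
              ext x
              simp only [Set.mem_inter_iff, Set.mem_setOf_eq, Set.mem_diff, Finset.mem_coe]
            rw [he]
            exact Set.ncard_inter_add_ncard_diff_eq_ncard _ _ (Set.toFinite _)
          have hsplitS : ((↑S : Set V) ∩ T.sAnc ↑v).ncard + ((↑S : Set V) \ T.sAnc ↑v).ncard
              = S.card := by
            rw [← Set.ncard_coe_finset S]
            exact Set.ncard_inter_add_ncard_diff_eq_ncard _ _ (Set.toFinite _)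
          have hcomm : ((↑S : Set V) ∩ T.sAnc ↑v).ncard = (T.sAnc ↑v ∩ ↑S).ncard := by
            rw [Set.inter_comm]
          have hdeq := T.depth_eq_sAnc' (↑v : V)
          have hmain : ((↑S : Set V) \ T.sAnc ↑v).ncard + T.depth ↑v ≤ T.height := by
            by_cases hcase : T.depth ↑v ≤ dstar
            · have hsub2 : ∀ x ∈ ((↑S : Set V) \ T.sAnc ↑v),
                  T.depth x ∈ Finset.Icc (T.depth ↑v + 1) dstar := by
                intro x hx
                obtain ⟨hxS, hxA⟩ := hx
                have hxS' : x ∈ S := hxS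
                have hxd : T.depth x ≤ dstar := hdepthS x hxS'
                rcases lt_trichotomy (T.depth x) (T.depth ↑v) with h | h | h
                · exact absurd (hanc_of_low x ↑v hxd h) hxA
                · exact absurd (hinjP (T.depth ↑v) hcase x ↑v h rfl ▸ hxS') hvK
                · exact Finset.mem_Icc.2 ⟨by omega, hxd⟩
              have hinj2 : Set.InjOn T.depth ((↑S : Set V) \ T.sAnc ↑v) := by
                intro x hx y hy hxy
                exact hinjP (T.depth y) (hdepthS y hy.1) x y hxy rfl
              have hcard2 : ((↑S : Set V) \ T.sAnc ↑v).ncard ≤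
                  (↑(Finset.Icc (T.depth ↑v + 1) dstar) : Set ℕ).ncard :=
                Set.ncard_le_ncard_of_injOn T.depth
                  (fun x hx => by simpa using hsub2 x hx) hinj2 (Finset.finite_toSet _)
              rw [Set.ncard_coe_finset, Nat.card_Icc] at hcard2
              omega
            · have hemp : ((↑S : Set V) \ T.sAnc ↑v) = ∅ := by
                ext x
                simp only [Set.mem_diff, Set.mem_empty_iff_false, iff_false, not_and, not_not,
                  Finset.mem_coe]
                intro hxS
                exact hanc_of_low x ↑v (hdepthS x hxS) (by have := hdepthS x hxS; omega)
              rw [hemp, Set.ncard_empty]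
              omega
          omega
        have hc1K : c1 ∈ {v : V | v ∉ S} := by
          simp only [Set.mem_setOf_eq]
          intro hc
          exact hc1P (hSsub hc)
        have hSle : S.card < T.height := by
          have hb := hbound ⟨c1, hc1K⟩
          have hp := (T.delForest {v : V | v ∉ S}).depth_pos ⟨c1, hc1K⟩
          omega
        have hsup : (T.delForest {v : V | v ∉ S}).height ≤ T.height - S.card := by
          apply Finset.sup_le
          intro v _
          have := hbound v
          omega
        omega
      · -- path case
        push_neg at hbr
        have hinj := depth_injOn_low T huniq T.height (fun q hq => absurd hq (by
          have := hbr q; omega))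
        have hcard : Fintype.card V ≤ T.height := by
          calc Fintype.card V = Finset.univ.card := (Finset.card_univ (α := V)).symm
            _ ≤ (Finset.Icc 1 T.height).card := by
                apply Finset.card_le_card_of_injOn T.depth
                · intro x _
                  exact Finset.mem_Icc.2 ⟨T.depth_pos x, Finset.le_sup (Finset.mem_univ x)⟩
                · intro x _ y _ hxy
                  exact hinj (T.depth y) (Finset.le_sup (Finset.mem_univ y)) x y hxy rfl
            _ = T.height := by rw [Nat.card_Icc]; omega
        have hmem : Sm.card + treedepth (G.induce {v : V | v ∉ Sm}) ∈
          {h : ℕ | ∃ S : Finset V, IsMinSep G S ∧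
            h = S.card + treedepth (G.induce {v : V | v ∉ S})} := ⟨Sm, hSmMS, rfl⟩
        refine le_trans (Nat.sInf_le hmem) ?_
        have h1 : treedepth (G.induce {v : V | v ∉ Sm}) ≤ Fintype.card {v : V | v ∉ Sm} :=
          treedepth_le_card _
        have h2 : Fintype.card {v : V | v ∉ Sm} = Fintype.card V - Sm.card := by
          rw [Fintype.card_subtype]
          rw [show (Finset.univ.filter fun x => x ∈ {v : V | v ∉ Sm}) = Finset.univ \ Sm from by
            ext x; simp]
          rw [Finset.card_sdiff_of_subset (Finset.subset_univ _), Finset.card_univ]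
        have h3 : Sm.card ≤ Fintype.card V := Finset.card_le_univ Sm
        omega

end
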